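/- arXiv:1408.5682 — 2 statements merged into one kernel-verified Lean document; each statement's English description precedes it below -/
import Mathlib

section
/- Let G = (V,E,e) be a finite connected simple rooted graph and let k ≥ 1 be such that the set V_e^{[k]} of vertices of G at graph distance exactly k from e is nonempty; set σ = |V_e^{[k]}|. For N ≥ 1 let G^{[⋆N,k]} denote the distance k-graph of the N-fold star power G^{⋆N} = G ⋆ ⋯ ⋆ G, and let A^{[⋆N,k]} be its adjacency matrix. Then the vacuum spectral distribution of A^{[⋆N,k]}/√(Nσ) (i.e., the probability measure μ_N on ℝ whose m-th moment equals the (e,e)-entry of (A^{[⋆N,k]}/√(Nσ))^m for every m ≥ 0) converges weakly, as N → ∞, to the centered Bernoulli distribution (1/2)δ_{-1} + (1/2)δ_{1}. -/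
open MeasureTheory Filter
open scoped ENNReal Topology

noncomputable section

/-- The distance `k`-graph of a graph: same vertices, edges between vertices at distance `k`. -/
def distGraph {W : Type*} (H : SimpleGraph W) (k : ℕ) : SimpleGraph W where
  Adj x y := x ≠ y ∧ H.dist x y = k
  symm := ⟨fun x y h => ⟨h.1.symm, by rw [SimpleGraph.dist_comm]; exact h.2⟩⟩
  loopless := ⟨fun x h => h.1 rfl⟩

lemma distGraph_adj_iff {W : Type*} {H : SimpleGraph W} {k : ℕ} {x y : W} :
    (distGraph H k).Adj x y ↔ x ≠ y ∧ H.dist x y = k := Iff.rfl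

/-- Vertex set of the `N`-fold star power of a graph rooted at `e`:
the common root `none`, plus `N` copies of the non-root vertices. -/
abbrev StarVert (V : Type*) (e : V) (N : ℕ) := Option (Fin N × {v : V // v ≠ e})

def starAdj {V : Type*} (G : SimpleGraph V) (e : V) (N : ℕ) :
    StarVert V e N → StarVert V e N → Prop
  | none, none => False
  | none, some q => G.Adj e q.2.1
  | some p, none => G.Adj p.2.1 e
  | some p, some q => p.1 = q.1 ∧ G.Adj p.2.1 q.2.1

/-- The `N`-fold star power of a rooted graph `(G, e)`: `N` copies of `G` glued at `e`. -/
def starPower {V : Type*} (G : SimpleGraph V) (e : V) (N : ℕ) :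
    SimpleGraph (StarVert V e N) where
  Adj := starAdj G e N
  symm := by
    constructor
    rintro (_ | p) (_ | q) h
    · exact h.elim
    · exact h.symm
    · exact h.symm
    · exact ⟨h.1.symm, h.2.symm⟩
  loopless := by
    constructor
    rintro (_ | p) h
    · exact h.elim
    · exact G.irrefl h.2

/-- The vertex of the `i`-th copy of `G` in the `N`-fold star power corresponding to `v ∈ G`. -/
def rootedEmbed {V : Type*} [DecidableEq V] (e : V) (N : ℕ) (i : Fin N) (v : V) :
    StarVert V e N :=
  if h : v = e then none else some (i, ⟨v, h⟩)

open scoped Classical in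
/-- The real adjacency matrix of a graph. -/
def adjMat {W : Type*} [Fintype W] (H : SimpleGraph W) : Matrix W W ℝ :=
  fun x y => if H.Adj x y then 1 else 0

/-- The centered Bernoulli distribution `(1/2)δ_{-1} + (1/2)δ_1`. -/
def bern : Measure ℝ := (1/2 : ℝ≥0∞) • Measure.dirac (-1) + (1/2 : ℝ≥0∞) • Measure.dirac 1

/-- The Cauchy transform of a measure on `ℝ`. -/
def cauchyT (μ : Measure ℝ) (z : ℂ) : ℂ := ∫ x, (z - (x : ℂ))⁻¹ ∂μ

/-- The distance `d(μ₁,μ₂) = sup_{Im z ≥ 1} |G_{μ₁}(z) - G_{μ₂}(z)|`. -/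
def cdist (μ₁ μ₂ : Measure ℝ) : ℝ :=
  ⨆ z : {z : ℂ // 1 ≤ z.im}, ‖cauchyT μ₁ z - cauchyT μ₂ z‖


section Graph

variable {V : Type*} [DecidableEq V] {G : SimpleGraph V} {e : V} {N : ℕ}

/-- Embedding of `G` as the `i`-th copy in the star power, as a graph hom. -/
def copyHom (G : SimpleGraph V) [DecidableEq V] (e : V) (N : ℕ) (i : Fin N) :
    G →g starPower G e N where
  toFun := rootedEmbed e N i
  map_rel' := by
    intro a b hab
    show (starPower G e N).Adj (rootedEmbed e N i a) (rootedEmbed e N i b)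
    unfold rootedEmbed
    split_ifs with h1 h2 h2
    · rw [h1, h2] at hab; exact absurd hab G.irrefl
    · exact (h1 ▸ hab : G.Adj e b)
    · exact (h2 ▸ hab : G.Adj a e)
    · exact ⟨rfl, hab⟩

/-- Projection from the star power back to `G`, as a graph hom. -/
def projHom (G : SimpleGraph V) (e : V) (N : ℕ) : starPower G e N →g G where
  toFun x := x.elim e (fun p => p.2.1)
  map_rel' := by
    rintro (_ | p) (_ | q) h
    · exact h.elim
    · exact h
    · exact h
    · exact h.2

lemma dist_root_copy (hconn : G.Connected) (i : Fin N) (v : {v : V // v ≠ e}) :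
    (starPower G e N).dist none (some (i, v)) = G.dist e v.1 := by
  obtain ⟨p, hp⟩ := hconn.exists_walk_length_eq_dist e v.1
  have he : copyHom G e N i e = none := dif_pos rfl
  have hv : copyHom G e N i v.1 = some (i, v) := dif_neg v.2
  let q0 := (p.map (copyHom G e N i)).copy he hv
  have h1 : (starPower G e N).dist none (some (i, v)) ≤ G.dist e v.1 := by
    have := SimpleGraph.dist_le ((p.map (copyHom G e N i)).copy he hv)
    rwa [SimpleGraph.Walk.length_copy, SimpleGraph.Walk.length_map, hp] at this
  have hreach : (starPower G e N).Reachable none (some (i, v)) := ⟨q0⟩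
  obtain ⟨q, hq⟩ := hreach.exists_walk_length_eq_dist
  have h2 : G.dist e v.1 ≤ (starPower G e N).dist none (some (i, v)) := by
    have h3 := SimpleGraph.dist_le (q.map (projHom G e N))
    rwa [SimpleGraph.Walk.length_map, hq] at h3
  omega

end Graph

section Graph2

variable {V : Type*} [DecidableEq V] {G : SimpleGraph V} {e : V} {N : ℕ}

lemma copy_eq_of_none_not_mem :
    ∀ {x y : StarVert V e N} (p : (starPower G e N).Walk x y),
      none ∉ p.support → Option.map Prod.fst x = Option.map Prod.fst y := by
  intro x y p
  induction p with
  | nil => intro _; rfl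
  | @cons u a b h q ih =>
    intro hn
    rw [SimpleGraph.Walk.support_cons, List.mem_cons] at hn
    push_neg at hn
    obtain ⟨hx, hq⟩ := hn
    have hab := ih hq
    match u, a, h with
    | none, _, _ => exact absurd rfl (Ne.symm hx)
    | some p1, none, _ =>
      exact absurd (SimpleGraph.Walk.start_mem_support q) (by simpa using hq)
    | some p1, some p2, h =>
      rw [← hab]
      simp [h.1]

/-- If `x` is at distance `k ≥ 1` from the root and adjacent (in the distance-`k` graph)
to a vertex `y` in copy `j`, then `x` lies in copy `j` as well. -/
lemma same_copy_of_adj {k : ℕ} (hk : 1 ≤ k) {x : StarVert V e N} {j : Fin N}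
    {w : {v : V // v ≠ e}}
    (hx : (starPower G e N).dist none x = k)
    (hadj : (distGraph (starPower G e N) k).Adj x (some (j, w))) :
    ∃ v, x = some (j, v) := by
  obtain ⟨hne, hdist⟩ := distGraph_adj_iff.mp hadj
  match x, hx, hne, hdist with
  | none, hx, _, _ => rw [SimpleGraph.dist_self] at hx; omega
  | some (i, v), hx, hne, hdist =>
    suffices hij : i = j by exact ⟨v, by rw [hij]⟩
    by_contra hij
    have hkne : (starPower G e N).dist (some (i,v)) (some (j,w)) ≠ 0 := by omega
    obtain ⟨p, hp⟩ := SimpleGraph.exists_walk_of_dist_ne_zero hkne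
    have hmem : (none : StarVert V e N) ∈ p.support := by
      by_contra hns
      have := copy_eq_of_none_not_mem p hns
      simp only [Option.map_some] at this
      exact hij (by simpa using this)
    have hlen : (p.takeUntil none hmem).length + (p.dropUntil none hmem).length = k := by
      rw [← SimpleGraph.Walk.length_append, SimpleGraph.Walk.take_spec p hmem, hp, hdist]
    have h1 : k ≤ (p.takeUntil none hmem).length := by
      have hd := SimpleGraph.dist_le (p.takeUntil none hmem)
      rw [SimpleGraph.dist_comm, hx] at hd
      exact hd
    have h2 : (p.dropUntil none hmem).length ≠ 0 := by
      intro h0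
      exact (by simpa using (SimpleGraph.Walk.eq_of_length_eq_zero h0 : (none : StarVert V e N) = some (j, w)))
    omega

end Graph2

section Count

open Finset

variable {V : Type*} [Fintype V] [DecidableEq V] {G : SimpleGraph V} {e : V} {N : ℕ} {k : ℕ}

open scoped Classical

lemma adjMat_symm {W : Type*} [Fintype W] (H : SimpleGraph W) (a b : W) :
    adjMat H a b = adjMat H b a := by
  unfold adjMat
  by_cases h : H.Adj a b
  · rw [if_pos h, if_pos h.symm]
  · rw [if_neg h, if_neg (fun hh => h hh.symm)]

lemma adjMat_nonneg {W : Type*} [Fintype W] (H : SimpleGraph W) (a b : W) :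
    0 ≤ adjMat H a b := by
  unfold adjMat; split <;> norm_num

lemma adjMat_diag {W : Type*} [Fintype W] (H : SimpleGraph W) (a : W) :
    adjMat H a a = 0 := by
  unfold adjMat; rw [if_neg H.irrefl]

lemma sq_apply {W : Type*} [Fintype W] [DecidableEq W] (B : Matrix W W ℝ) (a b : W) :
    (B ^ 2) a b = ∑ x, B a x * B x b := by
  rw [pow_two, Matrix.mul_apply]

/-- Number of distance-`k` neighbours of the root in the star power. -/
lemma card_root_nbrs (hconn : G.Connected) (hk : 1 ≤ k) :
    Fintype.card {x : StarVert V e N // (distGraph (starPower G e N) k).Adj none x} =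
      N * Fintype.card {v : V // G.dist e v = k} := by
  have hne : ∀ v : V, G.dist e v = k → v ≠ e := by
    intro v hv hv2
    subst hv2
    rw [SimpleGraph.dist_self] at hv; omega
  let F : {x : StarVert V e N // (distGraph (starPower G e N) k).Adj none x} ≃
      Fin N × {v : V // G.dist e v = k} :=
    { toFun := fun x => match x with
        | ⟨none, hx⟩ => absurd rfl (distGraph_adj_iff.mp hx).1
        | ⟨some (i, v), hx⟩ => (i, ⟨v.1, by
            have := (distGraph_adj_iff.mp hx).2
            rwa [dist_root_copy hconn i v] at this⟩)
      invFun := fun p =>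
        ⟨some (p.1, ⟨p.2.1, hne p.2.1 p.2.2⟩), by
          refine distGraph_adj_iff.mpr ⟨fun h => by simp at h, ?_⟩
          rw [dist_root_copy hconn]
          exact p.2.2⟩
      left_inv := fun x => by
        match x with
        | ⟨none, hx⟩ => exact absurd rfl (distGraph_adj_iff.mp hx).1
        | ⟨some (i, v), hx⟩ => rfl
      right_inv := fun p => rfl }
  rw [Fintype.card_congr F, Fintype.card_prod, Fintype.card_fin]

lemma B2_none_none (hconn : G.Connected) (hk : 1 ≤ k) :
    ((adjMat (distGraph (starPower G e N) k)) ^ 2) none none =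
      (N : ℝ) * Fintype.card {v : V // G.dist e v = k} := by
  set H := distGraph (starPower G e N) k
  rw [sq_apply]
  have h1 : ∀ x, adjMat H none x * adjMat H x none = if H.Adj none x then (1:ℝ) else 0 := by
    intro x
    rw [adjMat_symm H x none]
    unfold adjMat
    by_cases h : H.Adj none x <;> simp [h]
  rw [Finset.sum_congr rfl (fun x _ => h1 x)]
  rw [Finset.sum_boole]
  rw [← Fintype.card_subtype, card_root_nbrs hconn hk]
  push_cast
  ring

end Count

section Count2

open Finset

variable {V : Type*} [Fintype V] [DecidableEq V] {G : SimpleGraph V} {e : V} {N : ℕ} {k : ℕ}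

open scoped Classical

lemma sq_entry_symm {W : Type*} [Fintype W] [DecidableEq W] (H : SimpleGraph W) (a b : W) :
    ((adjMat H) ^ 2) a b = ((adjMat H) ^ 2) b a := by
  rw [sq_apply, sq_apply]
  refine Finset.sum_congr rfl (fun x _ => ?_)
  rw [adjMat_symm H a x, adjMat_symm H x b, mul_comm]

lemma B2_nonneg {W : Type*} [Fintype W] [DecidableEq W] (H : SimpleGraph W) (a b : W) :
    0 ≤ ((adjMat H) ^ 2) a b := by
  rw [sq_apply]
  exact Finset.sum_nonneg fun x _ => mul_nonneg (adjMat_nonneg H a x) (adjMat_nonneg H x b)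

/-- Off-root entries of the square of the distance-`k` adjacency matrix are bounded by the
number of non-root vertices of `V`. -/
lemma B2_entry_bound (hconn : G.Connected) (hk : 1 ≤ k) (j : Fin N) (w : {v : V // v ≠ e}) :
    ((adjMat (distGraph (starPower G e N) k)) ^ 2) none (some (j, w)) ≤
      (Fintype.card {v : V // v ≠ e} : ℝ) := by
  set H := distGraph (starPower G e N) k with hH
  rw [sq_apply]
  have h1 : ∀ x, adjMat H none x * adjMat H x (some (j, w)) =
      if H.Adj none x ∧ H.Adj x (some (j, w)) then (1:ℝ) else 0 := by
    intro x
    unfold adjMat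
    by_cases h : H.Adj none x <;> by_cases h2 : H.Adj x (some (j, w)) <;> simp [h, h2]
  rw [Finset.sum_congr rfl (fun x _ => h1 x), Finset.sum_boole]
  norm_cast
  rw [← Fintype.card_subtype]
  -- injection into {v // v ≠ e}
  have key : ∀ x : StarVert V e N, H.Adj none x → H.Adj x (some (j, w)) →
      ∃ v, x = some (j, v) := by
    intro x hx hxy
    exact same_copy_of_adj hk (distGraph_adj_iff.mp hx).2 hxy
  let f : {x : StarVert V e N // H.Adj none x ∧ H.Adj x (some (j, w))} → {v : V // v ≠ e} :=
    fun x => Option.elim x.1 w Prod.snd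
  have hinj : Function.Injective f := by
    rintro ⟨x1, hx1⟩ ⟨x2, hx2⟩ hf
    obtain ⟨v1, rfl⟩ := key x1 hx1.1 hx1.2
    obtain ⟨v2, rfl⟩ := key x2 hx2.1 hx2.2
    simp only [f, Option.elim] at hf
    simp [hf]
  exact Fintype.card_le_of_injective f hinj

lemma card_starVert :
    Fintype.card (StarVert V e N) = N * Fintype.card {v : V // v ≠ e} + 1 := by
  rw [Fintype.card_option, Fintype.card_prod, Fintype.card_fin]

/-- Bound on the fourth-moment matrix entry. -/
lemma B4_bound (hconn : G.Connected) (hk : 1 ≤ k) :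
    ((adjMat (distGraph (starPower G e N) k)) ^ 4) none none ≤
      ((N : ℝ) * Fintype.card {v : V // G.dist e v = k}) ^ 2 +
        (N : ℝ) * (Fintype.card {v : V // v ≠ e} : ℝ) ^ 3 := by
  set H := distGraph (starPower G e N) k with hH
  set B := adjMat H with hB
  set D : ℝ := (Fintype.card {v : V // v ≠ e} : ℝ) with hD
  have hDnn : 0 ≤ D := by positivity
  have h4 : (B ^ 4) none none = ∑ y, (B ^ 2) none y * (B ^ 2) y none := by
    rw [show (4:ℕ) = 2 + 2 from rfl, pow_add, Matrix.mul_apply]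
  rw [h4]
  have hterm : ∀ y, (B ^ 2) none y * (B ^ 2) y none = ((B ^ 2) none y) ^ 2 := by
    intro y; rw [sq_entry_symm H y none]; exact (pow_two _).symm
  rw [Finset.sum_congr rfl (fun y _ => hterm y)]
  rw [← Finset.add_sum_erase Finset.univ _ (Finset.mem_univ (none : StarVert V e N))]
  have h2 : ((B ^ 2) none none) ^ 2 =
      ((N : ℝ) * Fintype.card {v : V // G.dist e v = k}) ^ 2 := by
    rw [B2_none_none hconn hk]
  rw [h2]
  refine add_le_add (le_refl _) ?_
  have hbd : ∀ y ∈ Finset.univ.erase (none : StarVert V e N),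
      ((B ^ 2) none y) ^ 2 ≤ D ^ 2 := by
    intro y hy
    have hyne : y ≠ none := Finset.ne_of_mem_erase hy
    match y, hyne with
    | some (j, w), _ =>
      have h1 := B2_entry_bound (N := N) hconn hk j w
      have h0 := B2_nonneg H none (some (j, w))
      exact pow_le_pow_left₀ h0 h1 2
  calc ∑ y ∈ Finset.univ.erase (none : StarVert V e N), ((B ^ 2) none y) ^ 2
      ≤ (Finset.univ.erase (none : StarVert V e N)).card • (D ^ 2) :=
        Finset.sum_le_card_nsmul _ _ _ hbd
    _ = ((Finset.univ.erase (none : StarVert V e N)).card : ℝ) * D ^ 2 := by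
        rw [nsmul_eq_mul]
    _ = (N : ℝ) * D ^ 3 := by
        rw [Finset.card_erase_of_mem (Finset.mem_univ _), Finset.card_univ, card_starVert]
        push_cast
        ring

end Count2

section Analysis

private lemma arith_aux {K δ t ε : ℝ} (hK : 0 ≤ K) (hδ : 0 < δ) (hδ1 : δ ≤ 1)
    (ht : δ ^ 2 ≤ t) (hε : 0 < ε) : 4 * K + K * t ≤ ε + 5 * K / δ ^ 4 * t ^ 2 := by
  have h0 : 0 ≤ t := le_trans (by positivity) ht
  have hstep : 4 * K + K * t ≤ 5 * K / δ ^ 4 * t ^ 2 := by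
    rw [div_mul_eq_mul_div, le_div_iff₀ (by positivity : (0:ℝ) < δ ^ 4)]
    have f1 : δ ^ 4 ≤ t ^ 2 := by nlinarith
    have f2 : t * δ ^ 4 ≤ t ^ 2 := by
      have hδ42 : δ ^ 4 ≤ δ ^ 2 := by
        calc δ ^ 4 = δ ^ 2 * δ ^ 2 := by ring
          _ ≤ 1 * δ ^ 2 := by
            apply mul_le_mul_of_nonneg_right _ (by positivity)
            nlinarith
          _ = δ ^ 2 := one_mul _
      have g1 : t * δ ^ 4 ≤ t * δ ^ 2 := mul_le_mul_of_nonneg_left hδ42 h0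
      have g2 : t * δ ^ 2 ≤ t * t := mul_le_mul_of_nonneg_left ht h0
      nlinarith
    nlinarith
  linarith

lemma key_pointwise (f : BoundedContinuousFunction ℝ ℝ) {ε : ℝ} (hε : 0 < ε) :
    ∃ C : ℝ, 0 ≤ C ∧ ∀ x : ℝ,
      |f x - ((f 1 + f (-1))/2 + ((f 1 - f (-1))/2) * x)| ≤ ε + C * (x^2 - 1)^2 := by
  set a := (f 1 + f (-1))/2 with ha
  set b := (f 1 - f (-1))/2 with hb
  set h : ℝ → ℝ := fun x => f x - (a + b * x) with hdef
  have hcont : Continuous h := f.continuous.sub (by continuity)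
  have h1 : h 1 = 0 := by simp only [hdef, ha, hb]; ring
  have hm1 : h (-1) = 0 := by simp only [hdef, ha, hb]; ring
  have hc1 : ContinuousAt h 1 := hcont.continuousAt
  have hcm1 : ContinuousAt h (-1) := hcont.continuousAt
  rw [Metric.continuousAt_iff] at hc1 hcm1
  obtain ⟨δ₁, hδ₁, hδ₁'⟩ := hc1 ε hε
  obtain ⟨δ₂, hδ₂, hδ₂'⟩ := hcm1 ε hε
  obtain ⟨δ, hδpos, hδle1, hd1, hd2⟩ :
      ∃ δ : ℝ, 0 < δ ∧ δ ≤ 1 ∧ δ ≤ δ₁ ∧ δ ≤ δ₂ :=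
    ⟨min 1 (min δ₁ δ₂), lt_min one_pos (lt_min hδ₁ hδ₂), min_le_left _ _,
      le_trans (min_le_right _ _) (min_le_left _ _),
      le_trans (min_le_right _ _) (min_le_right _ _)⟩
  have hKnn : (0:ℝ) ≤ ‖f‖ := norm_nonneg f
  have hfb : ∀ x : ℝ, |f x| ≤ ‖f‖ := fun x => f.norm_coe_le_norm x
  refine ⟨5 * ‖f‖ / δ ^ 4, by positivity, fun x => ?_⟩
  show |h x| ≤ ε + 5 * ‖f‖ / δ ^ 4 * (x ^ 2 - 1) ^ 2
  have hCnn : 0 ≤ 5 * ‖f‖ / δ ^ 4 * (x ^ 2 - 1) ^ 2 := by positivity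
  by_cases hx1 : |x - 1| < δ
  · have hd : dist x 1 < δ₁ := by
      rw [Real.dist_eq]; exact lt_of_lt_of_le hx1 hd1
    have := hδ₁' hd
    rw [h1, dist_zero_right, Real.norm_eq_abs] at this
    linarith
  by_cases hx2 : |x + 1| < δ
  · have hd : dist x (-1) < δ₂ := by
      rw [Real.dist_eq, (by ring : x - (-1) = x + 1)]
      exact lt_of_lt_of_le hx2 hd2
    have := hδ₂' hd
    rw [hm1, dist_zero_right, Real.norm_eq_abs] at this
    linarith
  push_neg at hx1 hx2
  have htnn : 0 ≤ |x ^ 2 - 1| := abs_nonneg _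
  have htlb : δ ^ 2 ≤ |x ^ 2 - 1| := by
    rw [(by ring : x ^ 2 - 1 = (x - 1) * (x + 1)), abs_mul, pow_two]
    exact mul_le_mul hx1 hx2 hδpos.le (abs_nonneg _)
  have hax : |a| ≤ ‖f‖ := by
    have h1 := abs_le.mp (hfb 1)
    have h2 := abs_le.mp (hfb (-1))
    rw [abs_le, ha]
    constructor <;> [linarith [h1.1, h2.1]; linarith [h1.2, h2.2]]
  have hbx : |b| ≤ ‖f‖ := by
    have h1 := abs_le.mp (hfb 1)
    have h2 := abs_le.mp (hfb (-1))
    rw [abs_le, hb]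
    constructor <;> [linarith [h1.1, h2.2]; linarith [h1.2, h2.1]]
  have hxb : |x| ≤ 2 + |x ^ 2 - 1| := by
    have h1 : |x| ≤ 1 + x ^ 2 := by nlinarith [sq_abs x, sq_nonneg (|x| - 1), abs_nonneg x]
    have h2 : x ^ 2 - 1 ≤ |x ^ 2 - 1| := le_abs_self _
    linarith
  have hhx : |h x| ≤ 4 * ‖f‖ + ‖f‖ * |x ^ 2 - 1| := by
    have e1 : |h x| ≤ |f x| + |a + b * x| := by
      simp only [hdef]
      exact abs_sub _ _
    have e2 : |a + b * x| ≤ |a| + |b| * |x| := by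
      calc |a + b * x| ≤ |a| + |b * x| := abs_add_le _ _
        _ = |a| + |b| * |x| := by rw [abs_mul]
    have e3 : |b| * |x| ≤ ‖f‖ * (2 + |x ^ 2 - 1|) :=
      mul_le_mul hbx hxb (abs_nonneg _) hKnn
    have e4 := hfb x
    linarith
  have hsq : (x ^ 2 - 1) ^ 2 = |x ^ 2 - 1| ^ 2 := (sq_abs _).symm
  rw [hsq]
  exact le_trans hhx (arith_aux hKnn hδpos hδle1 htlb hε)

end Analysis

section Conv

lemma integral_bern (f : BoundedContinuousFunction ℝ ℝ) :
    ∫ x, f x ∂bern = (f 1 + f (-1)) / 2 := by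
  have i1 : IsFiniteMeasure ((1/2 : ℝ≥0∞) • MeasureTheory.Measure.dirac (-1:ℝ)) := by
    constructor
    rw [MeasureTheory.Measure.smul_apply, smul_eq_mul, MeasureTheory.Measure.dirac_apply]
    simp
  have i2 : IsFiniteMeasure ((1/2 : ℝ≥0∞) • MeasureTheory.Measure.dirac (1:ℝ)) := by
    constructor
    rw [MeasureTheory.Measure.smul_apply, smul_eq_mul, MeasureTheory.Measure.dirac_apply]
    simp
  rw [bern, MeasureTheory.integral_add_measure (f.integrable _) (f.integrable _),
    MeasureTheory.integral_smul_measure, MeasureTheory.integral_smul_measure,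
    MeasureTheory.integral_dirac, MeasureTheory.integral_dirac]
  simp only [smul_eq_mul]
  rw [ENNReal.toReal_div]
  simp
  ring

lemma tendsto_integral_bcf
    (μ : ℕ → MeasureTheory.Measure ℝ)
    (hprob : ∀ N, 1 ≤ N → MeasureTheory.IsProbabilityMeasure (μ N))
    (hm1int : ∀ N, 1 ≤ N → MeasureTheory.Integrable (fun x : ℝ => x) (μ N))
    (hm1 : ∀ N, 1 ≤ N → ∫ x, x ∂(μ N) = 0)
    (hqint : ∀ N, 1 ≤ N → MeasureTheory.Integrable (fun x : ℝ => (x ^ 2 - 1) ^ 2) (μ N))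
    (hq : Filter.Tendsto (fun N => ∫ x, (x ^ 2 - 1) ^ 2 ∂(μ N)) Filter.atTop (nhds 0))
    (f : BoundedContinuousFunction ℝ ℝ) :
    Filter.Tendsto (fun N => ∫ x, f x ∂(μ N)) Filter.atTop
      (nhds ((f 1 + f (-1)) / 2)) := by
  rw [Metric.tendsto_atTop]
  intro ε hε
  obtain ⟨C, hC0, hCb⟩ := key_pointwise f (show (0:ℝ) < ε/3 by linarith)
  rw [Metric.tendsto_atTop] at hq
  obtain ⟨N₀, hN₀⟩ := hq (ε / (3 * (C + 1))) (by positivity)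
  refine ⟨max N₀ 1, fun n hn => ?_⟩
  have hn1 : 1 ≤ n := le_trans (le_max_right _ _) hn
  have hnN : N₀ ≤ n := le_trans (le_max_left _ _) hn
  haveI := hprob n hn1
  have hfint : MeasureTheory.Integrable (fun x => f x) (μ n) := f.integrable _
  have hbint : MeasureTheory.Integrable
      (fun x : ℝ => ((f 1 - f (-1))/2) * x) (μ n) := (hm1int n hn1).const_mul _
  have haffint : MeasureTheory.Integrable
      (fun x : ℝ => (f 1 + f (-1))/2 + ((f 1 - f (-1))/2) * x) (μ n) :=
    (MeasureTheory.integrable_const _).add hbint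
  have hIaff : ∫ x, ((f 1 + f (-1))/2 + ((f 1 - f (-1))/2) * x) ∂(μ n)
      = (f 1 + f (-1))/2 := by
    rw [MeasureTheory.integral_add (MeasureTheory.integrable_const _) hbint,
      MeasureTheory.integral_const, MeasureTheory.integral_const_mul, hm1 n hn1]
    simp
  have hdiff : ∫ x, f x ∂(μ n) - (f 1 + f (-1))/2
      = ∫ x, (f x - ((f 1 + f (-1))/2 + ((f 1 - f (-1))/2) * x)) ∂(μ n) := by
    rw [MeasureTheory.integral_sub hfint haffint, hIaff]
  have hqnn : 0 ≤ ∫ x, (x ^ 2 - 1) ^ 2 ∂(μ n) :=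
    MeasureTheory.integral_nonneg (fun x => sq_nonneg _)
  have hqlt : ∫ x, (x ^ 2 - 1) ^ 2 ∂(μ n) < ε / (3 * (C + 1)) := by
    have := hN₀ n hnN
    rw [Real.dist_eq, sub_zero, abs_of_nonneg hqnn] at this
    exact this
  have hbound : |∫ x, (f x - ((f 1 + f (-1))/2 + ((f 1 - f (-1))/2) * x)) ∂(μ n)|
      ≤ ε/3 + C * ∫ x, (x ^ 2 - 1) ^ 2 ∂(μ n) := by
    have e1 : |∫ x, (f x - ((f 1 + f (-1))/2 + ((f 1 - f (-1))/2) * x)) ∂(μ n)|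
        ≤ ∫ x, |f x - ((f 1 + f (-1))/2 + ((f 1 - f (-1))/2) * x)| ∂(μ n) := by
      simpa [Real.norm_eq_abs] using
        MeasureTheory.norm_integral_le_integral_norm
          (μ := μ n) (fun x : ℝ => f x - ((f 1 + f (-1))/2 + ((f 1 - f (-1))/2) * x))
    have e2 : ∫ x, |f x - ((f 1 + f (-1))/2 + ((f 1 - f (-1))/2) * x)| ∂(μ n)
        ≤ ∫ x, (ε/3 + C * (x ^ 2 - 1) ^ 2) ∂(μ n) := by
      refine MeasureTheory.integral_mono (hfint.sub haffint).abs ?_ (fun x => hCb x)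
      exact (MeasureTheory.integrable_const _).add ((hqint n hn1).const_mul C)
    have e3 : ∫ x, (ε/3 + C * (x ^ 2 - 1) ^ 2) ∂(μ n)
        = ε/3 + C * ∫ x, (x ^ 2 - 1) ^ 2 ∂(μ n) := by
      rw [MeasureTheory.integral_add (MeasureTheory.integrable_const _)
        ((hqint n hn1).const_mul C), MeasureTheory.integral_const,
        MeasureTheory.integral_const_mul]
      simp
    linarith
  rw [Real.dist_eq]
  have hfinal : C * ∫ x, (x ^ 2 - 1) ^ 2 ∂(μ n) ≤ ε / 3 := by
    have h1 : C * ∫ x, (x ^ 2 - 1) ^ 2 ∂(μ n) ≤ C * (ε / (3 * (C + 1))) :=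
      mul_le_mul_of_nonneg_left hqlt.le hC0
    have h2 : C * (ε / (3 * (C + 1))) ≤ ε / 3 := by
      rw [mul_div_assoc', div_le_div_iff₀ (by positivity) (by norm_num)]
      nlinarith
    linarith
  calc |∫ x, f x ∂(μ n) - (f 1 + f (-1))/2|
      = |∫ x, (f x - ((f 1 + f (-1))/2 + ((f 1 - f (-1))/2) * x)) ∂(μ n)| := by rw [hdiff]
    _ ≤ ε/3 + C * ∫ x, (x ^ 2 - 1) ^ 2 ∂(μ n) := hbound
    _ ≤ ε/3 + ε/3 := by linarith
    _ < ε := by linarith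

end Conv

section Wrap

open scoped Classical

variable {V : Type*} [Fintype V] [DecidableEq V] {G : SimpleGraph V} {e : V} {N : ℕ} {k : ℕ}

lemma B2_none_none' (hconn : G.Connected) (hk : 1 ≤ k) :
    ((adjMat (distGraph (starPower G e N) k)) ^ 2) none none =
      (N : ℝ) * Nat.card {v : V | G.dist e v = k} := by
  rw [B2_none_none hconn hk, Nat.card_eq_fintype_card]
  norm_cast

lemma B4_bound' (hconn : G.Connected) (hk : 1 ≤ k) :
    ((adjMat (distGraph (starPower G e N) k)) ^ 4) none none ≤
      ((N : ℝ) * Nat.card {v : V | G.dist e v = k}) ^ 2 +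
        (N : ℝ) * (Nat.card {v : V // v ≠ e} : ℝ) ^ 3 := by
  have := B4_bound (G := G) (e := e) (N := N) (k := k) hconn hk
  have hc : (Fintype.card {v : V // G.dist e v = k} : ℝ) =
      (Nat.card {v : V | G.dist e v = k} : ℝ) := by
    rw [Nat.card_eq_fintype_card]
    norm_cast
  have hd : (Fintype.card {v : V // v ≠ e} : ℝ) = (Nat.card {v : V // v ≠ e} : ℝ) := by
    rw [Nat.card_eq_fintype_card]
  rwa [hc, hd] at this

end Wrap

/-- Asymptotic vacuum spectral distribution of the distance `k`-graph of the
`N`-fold star power: it converges weakly to the centered Bernoulli law `(1/2)δ₋₁ + (1/2)δ₁`. -/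
theorem star_power_distance_k_graph_bernoulli_limit
    {V : Type*} [Fintype V] [DecidableEq V] (G : SimpleGraph V) (e : V)
    (hconn : G.Connected) (k : ℕ) (hk : 1 ≤ k)
    (σ : ℕ) (hσ : σ = Nat.card {v : V | G.dist e v = k}) (hσpos : 1 ≤ σ)
    (μ : ℕ → Measure ℝ)
    (hprob : ∀ N, 1 ≤ N → IsProbabilityMeasure (μ N))
    (hint : ∀ N, 1 ≤ N → ∀ m : ℕ, Integrable (fun x : ℝ => x ^ m) (μ N))
    (hmom : ∀ N, 1 ≤ N → ∀ m : ℕ,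
      ∫ x, x ^ m ∂(μ N) =
        (((Real.sqrt (N * σ))⁻¹ • adjMat (distGraph (starPower G e N) k)) ^ m) none none) :
    ∀ f : BoundedContinuousFunction ℝ ℝ,
      Tendsto (fun N => ∫ x, f x ∂(μ N)) atTop (𝓝 (∫ x, f x ∂bern)) := by
  intro f
  -- positivity facts
  have hm1int : ∀ N, 1 ≤ N → Integrable (fun x : ℝ => x) (μ N) := by
    intro N hN
    simpa using hint N hN 1
  have hm1 : ∀ N, 1 ≤ N → ∫ x, x ∂(μ N) = 0 := by
    intro N hN
    have h := hmom N hN 1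
    rw [pow_one, Matrix.smul_apply, adjMat_diag, smul_zero] at h
    simpa using h
  have hNσpos : ∀ N : ℕ, 1 ≤ N → (0:ℝ) < (N : ℝ) * (σ : ℝ) := by
    intro N hN
    have h1 : (0:ℝ) < (N:ℝ) := by exact_mod_cast hN
    have h2 : (0:ℝ) < (σ:ℝ) := by exact_mod_cast hσpos
    exact mul_pos h1 h2
  have hm2 : ∀ N, 1 ≤ N → ∫ x, x ^ 2 ∂(μ N) = 1 := by
    intro N hN
    have h := hmom N hN 2
    rw [smul_pow, Matrix.smul_apply, B2_none_none' hconn hk, smul_eq_mul, ← hσ,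
      inv_pow, Real.sq_sqrt (hNσpos N hN).le] at h
    rw [h, inv_mul_cancel₀ (hNσpos N hN).ne']
  set D : ℝ := (Nat.card {v : V // v ≠ e} : ℝ) with hD
  have hDnn : 0 ≤ D := by positivity
  have hm4 : ∀ N, 1 ≤ N → ∫ x, x ^ 4 ∂(μ N) ≤ 1 + D ^ 3 / N := by
    intro N hN
    have h := hmom N hN 4
    have hc4 : ((Real.sqrt ((N:ℝ) * σ))⁻¹) ^ 4 = (((N:ℝ) * σ) ^ 2)⁻¹ := by
      rw [inv_pow, show (4:ℕ) = 2 * 2 from rfl, pow_mul, Real.sq_sqrt (hNσpos N hN).le]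
    rw [smul_pow, Matrix.smul_apply, smul_eq_mul, hc4] at h
    have hb := B4_bound' (G := G) (e := e) (N := N) (k := k) hconn hk
    rw [← hσ, ← hD] at hb
    have hle : ∫ x, x ^ 4 ∂(μ N) ≤
        (((N:ℝ) * σ) ^ 2)⁻¹ * (((N:ℝ) * σ) ^ 2 + (N:ℝ) * D ^ 3) := by
      rw [h]
      exact mul_le_mul_of_nonneg_left hb (by positivity)
    have heq : (((N:ℝ) * σ) ^ 2)⁻¹ * (((N:ℝ) * σ) ^ 2 + (N:ℝ) * D ^ 3)
        = 1 + (N:ℝ) * D ^ 3 / ((N:ℝ) * σ) ^ 2 := by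
      field_simp
    rw [heq] at hle
    refine le_trans hle ?_
    have h1 : (0:ℝ) < (N:ℝ) := by exact_mod_cast hN
    have h2 : (1:ℝ) ≤ (σ:ℝ) := by exact_mod_cast hσpos
    have hfrac : (N:ℝ) * D ^ 3 / ((N:ℝ) * σ) ^ 2 ≤ D ^ 3 / N := by
      rw [div_le_div_iff₀ (by positivity) h1]
      have : (N:ℝ) * D ^ 3 * N = D ^ 3 * (N:ℝ) ^ 2 := by ring
      rw [this]
      have : ((N:ℝ) * σ) ^ 2 = (N:ℝ) ^ 2 * (σ:ℝ) ^ 2 := by ring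
      rw [this]
      have hσ2 : (1:ℝ) ≤ (σ:ℝ) ^ 2 := by nlinarith
      have key : 0 ≤ D ^ 3 * (N:ℝ) ^ 2 * ((σ:ℝ) ^ 2 - 1) :=
        mul_nonneg (mul_nonneg (pow_nonneg hDnn 3) (sq_nonneg _)) (by linarith)
      nlinarith [key]
    linarith
  have hqint : ∀ N, 1 ≤ N → Integrable (fun x : ℝ => (x ^ 2 - 1) ^ 2) (μ N) := by
    intro N hN
    haveI := hprob N hN
    have hfun : (fun x : ℝ => (x ^ 2 - 1) ^ 2) = fun x : ℝ => x ^ 4 - 2 * x ^ 2 + 1 := by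
      funext x; ring
    rw [hfun]
    exact ((hint N hN 4).sub ((hint N hN 2).const_mul 2)).add (integrable_const 1)
  have hqval : ∀ N, 1 ≤ N →
      ∫ x, (x ^ 2 - 1) ^ 2 ∂(μ N) = (∫ x, x ^ 4 ∂(μ N)) - 1 := by
    intro N hN
    haveI := hprob N hN
    have hfun : ∀ x : ℝ, (x ^ 2 - 1) ^ 2 = x ^ 4 - 2 * x ^ 2 + 1 := fun x => by ring
    have e1 : ∫ x, (x ^ 4 - 2 * x ^ 2 + 1 : ℝ) ∂(μ N)
        = (∫ x, (x ^ 4 - 2 * x ^ 2 : ℝ) ∂(μ N)) + ∫ _x, (1:ℝ) ∂(μ N) :=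
      integral_add ((hint N hN 4).sub ((hint N hN 2).const_mul 2)) (integrable_const 1)
    have e2 : ∫ x, (x ^ 4 - 2 * x ^ 2 : ℝ) ∂(μ N)
        = (∫ x, (x ^ 4 : ℝ) ∂(μ N)) - ∫ x, (2 * x ^ 2 : ℝ) ∂(μ N) :=
      integral_sub (hint N hN 4) ((hint N hN 2).const_mul 2)
    have e3 : ∫ x, (2 * x ^ 2 : ℝ) ∂(μ N) = 2 * ∫ x, (x ^ 2 : ℝ) ∂(μ N) :=
      integral_const_mul 2 _
    have e4 : ∫ _x, (1:ℝ) ∂(μ N) = 1 := by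
      rw [integral_const]; simp
    simp only [hfun]
    rw [e1, e2, e3, e4, hm2 N hN]
    ring
  have hqten : Tendsto (fun N => ∫ x, (x ^ 2 - 1) ^ 2 ∂(μ N)) atTop (𝓝 0) := by
    have hup : Tendsto (fun N : ℕ => D ^ 3 / (N : ℝ)) atTop (𝓝 0) :=
      tendsto_const_div_atTop_nhds_zero_nat _
    refine tendsto_of_tendsto_of_tendsto_of_le_of_le' tendsto_const_nhds hup ?_ ?_
    · filter_upwards [eventually_ge_atTop 1] with N hN
      exact integral_nonneg (fun x => sq_nonneg _)
    · filter_upwards [eventually_ge_atTop 1] with N hN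
      rw [hqval N hN]
      linarith [hm4 N hN]
  rw [show ∫ x, f x ∂bern = (f 1 + f (-1)) / 2 from integral_bern f]
  exact tendsto_integral_bcf μ hprob hm1int hm1 hqint hqten f

end
end

section
/- Let G = (V,E,e) be a connected finite simple rooted graph, let k ≥ 1 be such that the distance k-graph G^{[k]} is non-trivial, and let N ≥ 2. Then the distance k-graph (G^{⋆N})^{[k]} of the N-fold star power decomposes as follows: two vertices x, y of G^{⋆N} are adjacent in (G^{⋆N})^{[k]} if and only if either (i) x and y lie in the same copy G_i of G and ∂_G(x,y) = k (i.e., x ~ y in the copy of G^{[k]} corresponding to G_i, so (G^{[k]})^{⋆N} ⊆ (G^{⋆N})^{[k]}), or (ii) x ∈ G_i and y ∈ G_j with i ≠ j and ∂_G(x,e) + ∂_G(y,e) = k; in case (ii), since ∂_G(x,e) > 0 and ∂_G(y,e) > 0, both endpoints satisfy ∂_G(x,e) < k and ∂_G(y,e) < k. -/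
open MeasureTheory Filter
open scoped ENNReal Topology

noncomputable section

section AuxStar

open SimpleGraph

variable {A B : Type*} {H : SimpleGraph A} {H' : SimpleGraph B}

lemma weak_hom_walk (f : A → B)
    (hf : ∀ a b, H.Adj a b → f a = f b ∨ H'.Adj (f a) (f b)) :
    ∀ {u w : A} (p : H.Walk u w), ∃ q : H'.Walk (f u) (f w), q.length ≤ p.length := by
  intro u w p
  induction p with
  | nil => exact ⟨Walk.nil, by simp⟩
  | cons h p ih =>
    obtain ⟨q, hq⟩ := ih
    rcases hf _ _ h with h' | h'
    · exact ⟨q.copy h'.symm rfl, by simp; omega⟩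
    · exact ⟨Walk.cons h' q, by simp; omega⟩

variable {V : Type*} [DecidableEq V] (G : SimpleGraph V) (e : V) (N : ℕ)

/-- Projection onto the `i`-th copy. -/
def starProj' {V : Type*} (e : V) (N : ℕ) (i : Fin N) : StarVert V e N → V :=
  fun a => a.elim e (fun p => if p.1 = i then p.2.1 else e)

lemma starProj_weak (i : Fin N) : ∀ a b, (starPower G e N).Adj a b →
    starProj' e N i a = starProj' e N i b ∨
      G.Adj (starProj' e N i a) (starProj' e N i b) := by
  rintro (_ | ⟨j, x⟩) (_ | ⟨j', y⟩) h
  · exact h.elim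
  · by_cases h' : j' = i
    · subst h'; exact Or.inr (by simpa [starProj'] using (show G.Adj e y.1 from h))
    · exact Or.inl (by simp [starProj', h'])
  · by_cases h' : j = i
    · subst h'; exact Or.inr (by simpa [starProj'] using (show G.Adj x.1 e from h))
    · exact Or.inl (by simp [starProj', h'])
  · obtain ⟨h1, h2⟩ := h
    simp only at h1
    subst h1
    by_cases h' : j = i
    · subst h'; exact Or.inr (by simpa [starProj'] using h2)
    · exact Or.inl (by simp [starProj', h'])

lemma rootedEmbed_root (i : Fin N) : rootedEmbed e N i e = none := dif_pos rfl

lemma rootedEmbed_ne (i : Fin N) {x : V} (hx : x ≠ e) :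
    rootedEmbed e N i x = some (i, ⟨x, hx⟩) := dif_neg hx

lemma starProj_rootedEmbed (i : Fin N) (x : V) :
    starProj' e N i (rootedEmbed e N i x) = x := by
  unfold rootedEmbed
  split_ifs with h
  · simp [starProj', h]
  · simp [starProj']

lemma rootedEmbed_adj (i : Fin N) {x y : V} (h : G.Adj x y) :
    (starPower G e N).Adj (rootedEmbed e N i x) (rootedEmbed e N i y) := by
  unfold rootedEmbed
  split_ifs with h1 h2 h2
  · exact absurd (h1.trans h2.symm) h.ne
  · subst h1; exact h
  · subst h2; exact h
  · exact ⟨rfl, h⟩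

lemma dist_star_same (hconn : G.Connected) (i : Fin N) (x y : V) :
    (starPower G e N).dist (rootedEmbed e N i x) (rootedEmbed e N i y) = G.dist x y := by
  obtain ⟨p, hp⟩ := hconn.exists_walk_length_eq_dist x y
  obtain ⟨q, hq⟩ := weak_hom_walk (rootedEmbed e N i)
    (fun a b h => Or.inr (rootedEmbed_adj G e N i h)) p
  refine le_antisymm (le_trans (SimpleGraph.dist_le q) (hp ▸ hq)) ?_
  obtain ⟨r, hr⟩ := (SimpleGraph.Reachable.exists_walk_length_eq_dist ⟨q⟩ :)
  obtain ⟨s, hs⟩ := weak_hom_walk (starProj' e N i) (starProj_weak G e N i) r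
  have hle := SimpleGraph.dist_le
    (s.copy (starProj_rootedEmbed e N i x) (starProj_rootedEmbed e N i y))
  rw [SimpleGraph.Walk.length_copy] at hle
  exact le_trans hle (hr ▸ hs)

/-- Index function: walks avoiding the root stay in one copy. -/
def starIdx {V : Type*} (e : V) (N : ℕ) : StarVert V e N → Option (Fin N) :=
  Option.map Prod.fst

lemma starIdx_eq_of_avoid {a b : StarVert V e N} (p : (starPower G e N).Walk a b)
    (hp : none ∉ p.support) : starIdx e N a = starIdx e N b := by
  induction p with
  | nil => rfl
  | @cons a c b h p ih =>
    rw [SimpleGraph.Walk.support_cons] at hp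
    have hc : c ∈ p.support := p.start_mem_support
    have ha : a ≠ none := fun h' => hp (h' ▸ List.mem_cons_self)
    have hc' : c ≠ none := fun h' => hp (List.mem_cons_of_mem _ (h' ▸ hc))
    obtain ⟨pa, rfl⟩ := Option.ne_none_iff_exists'.mp ha
    obtain ⟨pc, rfl⟩ := Option.ne_none_iff_exists'.mp hc'
    have := ih (fun h' => hp (List.mem_cons_of_mem _ h'))
    rw [← this]
    exact congrArg some h.1

lemma dist_star_diff (hconn : G.Connected) {i j : Fin N} (hij : i ≠ j)
    {x y : V} (hx : x ≠ e) (hy : y ≠ e) :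
    (starPower G e N).dist (rootedEmbed e N i x) (rootedEmbed e N j y)
      = G.dist x e + G.dist e y := by
  -- upper bound walk
  obtain ⟨p1, hp1⟩ := hconn.exists_walk_length_eq_dist x e
  obtain ⟨p2, hp2⟩ := hconn.exists_walk_length_eq_dist e y
  obtain ⟨q1, hq1⟩ := weak_hom_walk (rootedEmbed e N i)
    (fun a b h => Or.inr (rootedEmbed_adj G e N i h)) p1
  obtain ⟨q2, hq2⟩ := weak_hom_walk (rootedEmbed e N j)
    (fun a b h => Or.inr (rootedEmbed_adj G e N j h)) p2
  have hub : (starPower G e N).dist (rootedEmbed e N i x) (rootedEmbed e N j y)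
      ≤ G.dist x e + G.dist e y := by
    have := SimpleGraph.dist_le
      ((q1.copy rfl (rootedEmbed_root e N i)).append (q2.copy (rootedEmbed_root e N j) rfl))
    simp only [SimpleGraph.Walk.length_append, SimpleGraph.Walk.length_copy] at this
    omega
  refine le_antisymm hub ?_
  obtain ⟨r, hr⟩ := (SimpleGraph.Reachable.exists_walk_length_eq_dist
    ⟨(q1.copy rfl (rootedEmbed_root e N i)).append (q2.copy (rootedEmbed_root e N j) rfl)⟩ :)
  have hmem : (none : StarVert V e N) ∈ r.support := by
    by_contra hno
    have := starIdx_eq_of_avoid G e N r hno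
    rw [rootedEmbed_ne e N i hx, rootedEmbed_ne e N j hy] at this
    simp only [starIdx] at this
    exact hij (by injection this)
  have hsplit := r.take_spec hmem
  have hlen : (r.takeUntil none hmem).length + (r.dropUntil none hmem).length = r.length := by
    rw [← SimpleGraph.Walk.length_append, hsplit]
  obtain ⟨s1, hs1⟩ := weak_hom_walk (starProj' e N i) (starProj_weak G e N i)
    (r.takeUntil none hmem)
  obtain ⟨s2, hs2⟩ := weak_hom_walk (starProj' e N j) (starProj_weak G e N j)
    (r.dropUntil none hmem)
  have h1 : G.dist x e ≤ (r.takeUntil none hmem).length := by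
    have := SimpleGraph.dist_le (s1.copy (starProj_rootedEmbed e N i x) rfl)
    rw [SimpleGraph.Walk.length_copy] at this
    exact le_trans this hs1
  have h2 : G.dist e y ≤ (r.dropUntil none hmem).length := by
    have := SimpleGraph.dist_le (s2.copy rfl (starProj_rootedEmbed e N j y))
    rw [SimpleGraph.Walk.length_copy] at this
    exact le_trans this hs2
  omega

end AuxStar


/-- Decomposition of the distance `k`-graph of the `N`-fold star power:
two vertices are adjacent iff they lie in the same copy at `G`-distance `k` (the part
`(G^{[k]})^{⋆N}`), or they lie in distinct copies with distances to the root summing to `k`,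
in which case both distances to the root are strictly less than `k`. -/
theorem star_power_distance_k_graph_decomposition
    {V : Type*} [Fintype V] [DecidableEq V] (G : SimpleGraph V) (e : V)
    (hconn : G.Connected) (k : ℕ) (hk : 1 ≤ k)
    (hnontrivial : ∃ x y : V, (distGraph G k).Adj x y)
    (N : ℕ) (hN : 2 ≤ N) (u w : StarVert V e N) :
    (distGraph (starPower G e N) k).Adj u w ↔
      ((∃ i : Fin N, ∃ x y : V,
          u = rootedEmbed e N i x ∧ w = rootedEmbed e N i y ∧ (distGraph G k).Adj x y) ∨
       (∃ i j : Fin N, ∃ x y : V, i ≠ j ∧ x ≠ e ∧ y ≠ e ∧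
          u = rootedEmbed e N i x ∧ w = rootedEmbed e N j y ∧
          G.dist x e + G.dist y e = k ∧ G.dist x e < k ∧ G.dist y e < k)) := by
  constructor
  · rintro ⟨hne, hdist⟩
    match u, w with
    | none, none => exact absurd rfl hne
    | none, some ⟨j, y, hy⟩ =>
      left
      refine ⟨j, e, y, (rootedEmbed_root e N j).symm, (rootedEmbed_ne e N j hy).symm,
        Ne.symm hy, ?_⟩
      rw [← dist_star_same G e N hconn j e y, rootedEmbed_root, rootedEmbed_ne e N j hy]
      exact hdist
    | some ⟨i, x, hx⟩, none =>
      left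
      refine ⟨i, x, e, (rootedEmbed_ne e N i hx).symm, (rootedEmbed_root e N i).symm, hx, ?_⟩
      rw [← dist_star_same G e N hconn i x e, rootedEmbed_root, rootedEmbed_ne e N i hx]
      exact hdist
    | some ⟨i, x, hx⟩, some ⟨j, y, hy⟩ =>
      by_cases hij : i = j
      · subst hij
        left
        have hxy : x ≠ y := fun h => hne (by simp [h])
        refine ⟨i, x, y, (rootedEmbed_ne e N i hx).symm, (rootedEmbed_ne e N i hy).symm,
          hxy, ?_⟩
        rw [← dist_star_same G e N hconn i x y, rootedEmbed_ne e N i hx,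
          rootedEmbed_ne e N i hy]
        exact hdist
      · right
        have hd : G.dist x e + G.dist e y = k := by
          rw [← dist_star_diff G e N hconn hij hx hy, rootedEmbed_ne e N i hx,
            rootedEmbed_ne e N j hy]
          exact hdist
        have h1 : 0 < G.dist x e := hconn.pos_dist_of_ne hx
        have h2 : 0 < G.dist e y := hconn.pos_dist_of_ne (Ne.symm hy)
        refine ⟨i, j, x, y, hij, hx, hy, (rootedEmbed_ne e N i hx).symm,
          (rootedEmbed_ne e N j hy).symm, ?_, by omega, ?_⟩
        · rw [SimpleGraph.dist_comm (u := y)]; omega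
        · rw [SimpleGraph.dist_comm (u := y)]; omega
  · rintro (⟨i, x, y, rfl, rfl, hxy, hdxy⟩ | ⟨i, j, x, y, hij, hx, hy, rfl, rfl, hsum, _, _⟩)
    · refine ⟨?_, ?_⟩
      · intro h
        apply hxy
        have := congrArg (starProj' e N i) h
        rwa [starProj_rootedEmbed, starProj_rootedEmbed] at this
      · rw [dist_star_same G e N hconn]; exact hdxy
    · refine ⟨?_, ?_⟩
      · rw [rootedEmbed_ne e N i hx, rootedEmbed_ne e N j hy]
        simp [hij]
      · rw [dist_star_diff G e N hconn hij hx hy, SimpleGraph.dist_comm (u := e)]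
        exact hsum

end
end
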